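/- arXiv:math/9804009 — 3 statements merged into one kernel-verified Lean document; each statement's English description precedes it below -/
import Mathlib

section
/- There exists a row vector w ∈ ℝ³ with all coordinates strictly positive such that wᵀ·A = μ·wᵀ, where μ is the unique real root of t³ − 4t² + 3t − 1; i.e. the transpose of A also admits a strictly positive eigenvector for μ. -/
theorem positive_left_eigenvector (μ : ℝ) (hμ : μ ^ 3 - 4 * μ ^ 2 + 3 * μ - 1 = 0) :
    ∃ w : Fin 3 → ℝ, (∀ i, 0 < w i) ∧
      Matrix.vecMul w (!![1, 1, 0; 1, 2, 1; 1, 1, 1] : Matrix (Fin 3) (Fin 3) ℝ) = μ • w := by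
  have h1 : 1 < μ := by
    by_contra h
    push_neg at h
    have hs : 0 ≤ 1 - μ := by linarith
    nlinarith [sq_nonneg μ, mul_nonneg (mul_nonneg hs hs) hs]
  refine ⟨![(μ-1)^2, μ*(μ-1), μ], ?_, ?_⟩
  · intro i
    fin_cases i <;> simp <;> nlinarith
  · funext i
    fin_cases i <;>
      simp [Matrix.vecMul, Matrix.vecHead, Matrix.vecTail, dotProduct,
        Fin.sum_univ_three] <;> nlinarith [hμ]
end

section
/- For every nonzero integer vector v ∈ ℤ³, the sequence (Aⁿ·v)ₙ∈ℕ is unbounded in ℝ³, where A = [[1,1,0],[1,2,1],[1,1,1]]. -/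
open Matrix Polynomial

private def Az : Matrix (Fin 3) (Fin 3) ℤ := !![1, 1, 0; 1, 2, 1; 1, 1, 1]

private lemma noRatRoot (s : ℚ) : s^3 - 4*s^2 + 3*s - 1 ≠ 0 := by
  intro h
  set P : ℤ[X] := X^3 - 4*X^2 + 3*X - 1 with hP
  have haev : Polynomial.aeval s P = 0 := by
    simp [hP, map_ofNat]; linear_combination h
  have hmon : P.Monic := by rw [hP]; monicity!
  have hden : IsUnit (IsFractionRing.den ℤ s : ℤ) := by
    have := den_dvd_of_is_root haev
    rwa [hmon.leadingCoeff, ← isUnit_iff_dvd_one] at this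
  obtain ⟨m, hm⟩ := IsFractionRing.isInteger_of_isUnit_den hden
  have hm' : (m : ℚ) = s := hm
  have hz : m^3 - 4*m^2 + 3*m - 1 = 0 := by
    have : ((m:ℚ))^3 - 4*(m:ℚ)^2 + 3*(m:ℚ) - 1 = 0 := by rw [hm']; exact h
    exact_mod_cast this
  have hdvd : m ∣ 1 := ⟨m^2 - 4*m + 3, by linarith⟩
  rcases Int.isUnit_iff.mp (isUnit_of_dvd_one hdvd) with h1 | h1 <;> subst h1 <;> norm_num at hz

private lemma noRealRatRoot (μ : ℝ) (hcube : μ^3 = 4*μ^2 - 3*μ + 1) (s : ℚ)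
    (hs : (s : ℝ) = μ) : False := by
  apply noRatRoot s
  have : ((s^3 - 4*s^2 + 3*s - 1 : ℚ) : ℝ) = 0 := by push_cast; rw [hs]; linear_combination hcube
  exact_mod_cast this

private lemma indep (μ : ℝ) (hμ3 : 3 < μ) (hcube : μ^3 = 4*μ^2 - 3*μ + 1)
    (a b c : ℤ) (h : (a : ℝ) + b*μ + c*μ^2 = 0) : a = 0 ∧ b = 0 ∧ c = 0 := by
  have key : μ * ((b^2 - a*c + 4*b*c + 3*c^2 : ℤ) : ℝ) = ((c^2 - 4*a*c - a*b : ℤ) : ℝ) := by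
    push_cast
    linear_combination (c^2 : ℝ) * hcube - ((c:ℝ)*μ - b - 4*c) * h
  have hD : b^2 - a*c + 4*b*c + 3*c^2 = 0 := by
    by_contra hD0
    have hDR : ((b^2 - a*c + 4*b*c + 3*c^2 : ℤ) : ℝ) ≠ 0 := Int.cast_ne_zero.mpr hD0
    refine noRealRatRoot μ hcube
      ((c^2 - 4*a*c - a*b : ℤ) / ((b^2 - a*c + 4*b*c + 3*c^2 : ℤ) : ℚ)) ?_
    push_cast at key hDR ⊢
    rw [div_eq_iff hDR]
    linarith [key]
  have hE : c^2 - 4*a*c - a*b = 0 := by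
    have h1 : ((c^2 - 4*a*c - a*b : ℤ) : ℝ) = 0 := by
      rw [← key]
      have : ((b^2 - a*c + 4*b*c + 3*c^2 : ℤ) : ℝ) = 0 := by exact_mod_cast hD
      rw [this, mul_zero]
    exact_mod_cast h1
  rcases eq_or_ne c 0 with hc | hc
  · have hb : b = 0 := by
      have hb2 : b^2 = 0 := by rw [hc] at hD; linarith
      exact pow_eq_zero_iff (n := 2) (by norm_num) |>.mp hb2
    have ha : a = 0 := by
      rw [hc, hb] at h
      have : (a:ℝ) = 0 := by push_cast at h; linarith
      exact_mod_cast this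
    exact ⟨ha, hb, hc⟩
  · exfalso
    have ha : a ≠ 0 := by
      intro h0
      rw [h0] at hE
      simp at hE
      exact hc hE
    rcases eq_or_ne b (-4*c) with hb | hb
    · rw [hb] at hD hE
      have h2 : c * (3*c - a) = 0 := by linear_combination hD
      have h3 : a = 3*c := by
        rcases mul_eq_zero.mp h2 with h | h
        · exact absurd h hc
        · linarith
      rw [h3] at hE
      have : c^2 = 0 := by linarith
      exact hc (pow_eq_zero_iff (n := 2) (by norm_num) |>.mp this)
    · have hbt : (b + 4*c) * (a^2 - b*c - 3*a*c) = 0 := by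
        linear_combination (-c) * hD + (-(a - 3*c)) * hE
      have hT : a^2 - b*c - 3*a*c = 0 := by
        rcases mul_eq_zero.mp hbt with h | h
        · exact absurd (by linarith) hb
        · exact h
      have hroot : c^3 - 4*a*c^2 + 3*a^2*c - a^3 = 0 := by
        linear_combination (-a) * hT + c * hE
      apply noRatRoot ((c : ℚ)/(a : ℚ))
      have haQ : (a : ℚ) ≠ 0 := Int.cast_ne_zero.mpr ha
      have h9 : ((c:ℚ)^3 - 4*(a:ℚ)*(c:ℚ)^2 + 3*(a:ℚ)^2*(c:ℚ) - (a:ℚ)^3) = 0 := by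
        exact_mod_cast hroot
      field_simp
      linear_combination h9

private lemma fixed_zero (μ : ℝ) (hμ3 : 3 < μ) (hcube : μ^3 = 4*μ^2 - 3*μ + 1)
    (k : ℕ) (hk : k ≠ 0) (w : Fin 3 → ℤ) (hw : (Az ^ k).mulVec w = w) : w = 0 := by
  set u : Fin 3 → ℝ := ![(μ-1)^2, μ*(μ-1), μ] with hu
  set AR : Matrix (Fin 3) (Fin 3) ℝ := !![1, 1, 0; 1, 2, 1; 1, 1, 1] with hAR
  have heig : u ᵥ* AR = μ • u := by
    funext i
    fin_cases i <;>
      simp [hu, hAR, Matrix.vecMul, dotProduct, Fin.sum_univ_three,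
        Matrix.vecHead, Matrix.vecTail] <;>
      linarith [hcube]
  have heigk : ∀ n : ℕ, u ᵥ* (AR ^ n) = (μ ^ n) • u := by
    intro n
    induction n with
    | zero => simp
    | succ n ih =>
      rw [pow_succ, ← Matrix.vecMul_vecMul, ih, Matrix.smul_vecMul, heig, smul_smul, pow_succ]
  have hcast : (AR ^ k).mulVec (fun i => (w i : ℝ)) = fun i => (w i : ℝ) := by
    have hmap : AR = Az.map (Int.castRingHom ℝ) := by
      ext i j
      fin_cases i <;> fin_cases j <;>
        simp [Az, hAR, Matrix.vecHead, Matrix.vecTail]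
    funext i
    have h1 := RingHom.map_mulVec (Int.castRingHom ℝ) (Az ^ k) w i
    have h2 : (Az ^ k).map (Int.castRingHom ℝ) = AR ^ k := by
      rw [hmap, ← RingHom.mapMatrix_apply, ← RingHom.mapMatrix_apply, ← map_pow]
    rw [hw, h2] at h1
    simpa [Function.comp_def] using h1.symm
  set wR : Fin 3 → ℝ := fun i => (w i : ℝ) with hwR
  have hdot : u ⬝ᵥ wR = (μ ^ k) * (u ⬝ᵥ wR) := by
    conv_lhs => rw [← hcast, Matrix.dotProduct_mulVec, heigk k, smul_dotProduct]
    rw [smul_eq_mul]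
  have hμk : (1:ℝ) < μ ^ k := by
    calc (1:ℝ) < μ := by linarith
    _ ≤ μ ^ k := le_self_pow₀ (by linarith) hk
  have hdot0 : u ⬝ᵥ wR = 0 := by
    have h2 : (μ ^ k - 1) * (u ⬝ᵥ wR) = 0 := by linear_combination -hdot
    rcases mul_eq_zero.mp h2 with h | h
    · exact absurd h (sub_ne_zero.mpr (ne_of_gt hμk))
    · exact h
  have hexp : ((w 0 : ℤ) : ℝ) + ((-2*(w 0) - (w 1) + (w 2) : ℤ) : ℝ)*μ
      + (((w 0) + (w 1) : ℤ) : ℝ)*μ^2 = 0 := by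
    have hval : u ⬝ᵥ wR = (μ-1)^2 * (w 0) + μ*(μ-1)*(w 1) + μ*(w 2) := by
      simp [hu, hwR, dotProduct, Fin.sum_univ_three]
      try ring
    rw [hval] at hdot0
    push_cast
    linear_combination hdot0
  obtain ⟨h0, h1, h2⟩ := indep μ hμ3 hcube (w 0) (-2*(w 0) - (w 1) + (w 2)) ((w 0) + (w 1)) hexp
  funext i
  fin_cases i
  · show w 0 = 0; omega
  · show w 1 = 0; omega
  · show w 2 = 0; omega

theorem iterates_unbounded (v : Fin 3 → ℤ) (hv : v ≠ 0) :
    ¬ ∃ C : ℝ, ∀ n : ℕ,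
      ‖Matrix.mulVec ((!![1, 1, 0; 1, 2, 1; 1, 1, 1] : Matrix (Fin 3) (Fin 3) ℝ) ^ n)
        (fun i => (v i : ℝ))‖ ≤ C := by
  rintro ⟨C, hC⟩
  obtain ⟨μ, hμmem, hμroot⟩ : ∃ μ ∈ Set.Icc (3:ℝ) 4, μ^3 - 4*μ^2 + 3*μ - 1 = 0 := by
    have hcont : ContinuousOn (fun x : ℝ => x^3 - 4*x^2 + 3*x - 1) (Set.Icc 3 4) := by
      fun_prop
    have h0 : (0:ℝ) ∈ Set.Icc ((fun x : ℝ => x^3 - 4*x^2 + 3*x - 1) 3)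
        ((fun x : ℝ => x^3 - 4*x^2 + 3*x - 1) 4) := by norm_num
    obtain ⟨μ, hμ, hμ2⟩ := intermediate_value_Icc (by norm_num : (3:ℝ) ≤ 4) hcont h0
    exact ⟨μ, hμ, hμ2⟩
  have hμ3 : 3 < μ := by
    rcases lt_or_eq_of_le hμmem.1 with h | h
    · exact h
    · rw [← h] at hμroot; norm_num at hμroot
  have hcube : μ^3 = 4*μ^2 - 3*μ + 1 := by linear_combination hμroot
  set f : ℕ → (Fin 3 → ℤ) := fun n => (Az ^ n).mulVec v with hf
  have hmap : (!![1, 1, 0; 1, 2, 1; 1, 1, 1] : Matrix (Fin 3) (Fin 3) ℝ)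
      = Az.map (Int.castRingHom ℝ) := by
    ext i j
    fin_cases i <;> fin_cases j <;>
      simp [Az, Matrix.vecHead, Matrix.vecTail]
  have hcast : ∀ n i, ((!![1, 1, 0; 1, 2, 1; 1, 1, 1] : Matrix (Fin 3) (Fin 3) ℝ) ^ n).mulVec
      (fun i => (v i : ℝ)) i = ((f n i : ℤ) : ℝ) := by
    intro n i
    have h1 := RingHom.map_mulVec (Int.castRingHom ℝ) (Az ^ n) v i
    have h2 : (Az ^ n).map (Int.castRingHom ℝ)
        = (!![1, 1, 0; 1, 2, 1; 1, 1, 1] : Matrix (Fin 3) (Fin 3) ℝ) ^ n := by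
      rw [hmap, ← RingHom.mapMatrix_apply, ← RingHom.mapMatrix_apply, ← map_pow]
    rw [h2] at h1
    simpa [Function.comp_def, hf] using h1.symm
  set N : ℤ := ⌈C⌉ with hN
  have hbound : ∀ n i, f n i ∈ Set.Icc (-N) N := by
    intro n i
    have h1 : |((f n i : ℤ) : ℝ)| ≤ C := by
      rw [← hcast n i, ← Real.norm_eq_abs]
      exact le_trans (norm_le_pi_norm _ i) (hC n)
    have h2 : (|f n i| : ℝ) ≤ (N : ℝ) := by
      push_cast
      exact le_trans h1 (Int.le_ceil C)
    have h3 : |f n i| ≤ N := by exact_mod_cast h2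
    exact ⟨by linarith [(abs_le.mp h3).1], (abs_le.mp h3).2⟩
  have hfin : (Set.Icc (fun _ => -N) (fun _ => N) : Set (Fin 3 → ℤ)).Finite := Set.finite_Icc _ _
  have hmemIcc : ∀ n, f n ∈ (Set.Icc (fun _ => -N) (fun _ => N) : Set (Fin 3 → ℤ)) := by
    intro n
    exact ⟨fun i => (hbound n i).1, fun i => (hbound n i).2⟩
  obtain ⟨m, -, n, -, hmn, hfeq⟩ :=
    Set.infinite_univ.exists_ne_map_eq_of_mapsTo (fun n _ => hmemIcc n) hfin
  wlog hlt : m < n generalizing m n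
  · exact this n m hmn.symm hfeq.symm (by omega)
  have hdet : Az.det = 1 := by
    rw [Az, Matrix.det_fin_three]
    decide
  have : Invertible Az := Az.invertibleOfIsUnitDet (by rw [hdet]; exact isUnit_one)
  have hinvm : Invertible (Az ^ m) := invertiblePow Az m
  have hper : (Az ^ (n - m)).mulVec ((Az ^ m).mulVec v) = (Az ^ m).mulVec v := by
    rw [Matrix.mulVec_mulVec, ← pow_add]
    have hadd : n - m + m = n := by omega
    rw [hadd]
    exact hfeq.symm
  have hy0 : (Az ^ m).mulVec v = 0 := fixed_zero μ hμ3 hcube (n - m) (by omega) _ hper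
  apply hv
  have heq0 : (Az ^ m).mulVec v = (Az ^ m).mulVec 0 := by rw [hy0, Matrix.mulVec_zero]
  have hinj : Function.Injective (Az ^ m).mulVec := by
    intro x y hxy
    have := congrArg (fun z => (⅟(Az ^ m)).mulVec z) hxy
    simpa [Matrix.mulVec_mulVec, invOf_mul_self] using this
  exact hinj heq0
end

section
/- Let Π ⊆ ℝ³ be the 2-dimensional A-invariant subspace corresponding to the pair of non-real eigenvalues of A = [[1,1,0],[1,2,1],[1,1,1]] (equivalently, Π = {v ∈ ℝ³ : Aⁿ·v → 0 as n → ∞}). Then Π contains no nonzero integer vector. -/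
open Filter in
theorem contracting_plane_no_integer_points (v : Fin 3 → ℤ)
    (hv : Tendsto (fun n : ℕ =>
        Matrix.mulVec ((!![1, 1, 0; 1, 2, 1; 1, 1, 1] : Matrix (Fin 3) (Fin 3) ℝ) ^ n)
          (fun i => (v i : ℝ))) atTop (nhds 0)) :
    v = 0 := by
  set B : Matrix (Fin 3) (Fin 3) ℤ := !![1, 1, 0; 1, 2, 1; 1, 1, 1] with hB
  have hmap : (!![1, 1, 0; 1, 2, 1; 1, 1, 1] : Matrix (Fin 3) (Fin 3) ℝ)
      = B.map (Int.cast : ℤ → ℝ) := by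
    ext i j
    fin_cases i <;> fin_cases j <;> simp [hB, Matrix.vecHead, Matrix.vecTail]
  have key : ∀ (n : ℕ) (i : Fin 3),
      Matrix.mulVec ((!![1, 1, 0; 1, 2, 1; 1, 1, 1] : Matrix (Fin 3) (Fin 3) ℝ) ^ n)
        (fun i => (v i : ℝ)) i = (((B ^ n).mulVec v i : ℤ) : ℝ) := by
    intro n i
    have hpow : (!![1, 1, 0; 1, 2, 1; 1, 1, 1] : Matrix (Fin 3) (Fin 3) ℝ) ^ n
        = (B ^ n).map (Int.cast : ℤ → ℝ) := by
      rw [hmap]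
      have := map_pow ((Int.castRingHom ℝ).mapMatrix) B n
      simpa [RingHom.mapMatrix_apply] using this.symm
    rw [hpow]
    exact ((Int.castRingHom ℝ).map_mulVec (B ^ n) v i).symm
  -- componentwise tendsto
  have hcomp : ∀ i : Fin 3, Tendsto (fun n : ℕ => (((B ^ n).mulVec v i : ℤ) : ℝ))
      atTop (nhds 0) := by
    intro i
    have := (tendsto_pi_nhds.mp hv) i
    simpa [key] using this
  have hev : ∀ i : Fin 3, ∀ᶠ n : ℕ in atTop, (B ^ n).mulVec v i = 0 := by
    intro i
    have := (hcomp i).eventually (Metric.ball_mem_nhds (0 : ℝ) one_pos)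
    filter_upwards [this] with n hn
    simp only [Metric.mem_ball, Real.dist_eq, sub_zero] at hn
    by_contra h
    have h1 : (1 : ℤ) ≤ |(B ^ n).mulVec v i| := Int.one_le_abs h
    have : (1 : ℝ) ≤ |(((B ^ n).mulVec v i : ℤ) : ℝ)| := by
      rw [← Int.cast_abs]; exact_mod_cast h1
    linarith
  obtain ⟨n, h0, h1, h2⟩ := (((hev 0).and ((hev 1).and (hev 2))).exists)
  have hzero : (B ^ n).mulVec v = 0 := by
    funext i; fin_cases i <;> assumption
  have hdet : IsUnit (B ^ n).det := by
    have : B.det = 1 := by simp [hB, Matrix.det_fin_three, Matrix.vecHead, Matrix.vecTail]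
    rw [Matrix.det_pow, this, one_pow]; exact isUnit_one
  have := congrArg (Matrix.mulVec (B ^ n)⁻¹) hzero
  rwa [Matrix.mulVec_mulVec, Matrix.nonsing_inv_mul _ hdet, Matrix.one_mulVec,
    Matrix.mulVec_zero] at this
end
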